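/- Let h : ℝ → ℝ be differentiable and let a, k, m, ε ∈ ℝ. Suppose u : ℝ → ℝ → ℝ is C² on ℝ × (0,∞), a + u(t,r) ≠ 0 for all t ∈ ℝ and r > 0, and u satisfies u_t(t,r) = h'(u_r(t,r))·u_rr(t,r) + (m/r)·h(u_r(t,r)) + k/(a + u(t,r)) for all t ∈ ℝ and r > 0. Define v(t,r) = exp(ε)·(a + u(exp(−2ε)·t, exp(−ε)·r)) − a. Then a + v(t,r) ≠ 0 and v satisfies the same equation, v_t(t,r) = h'(v_r(t,r))·v_rr(t,r) + (m/r)·h(v_r(t,r)) + k/(a + v(t,r)), for all t ∈ ℝ and r > 0. -/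

import Mathlib

noncomputable section

/-- Partial derivative in the first (time) variable. -/
def partial_t (u : ℝ → ℝ → ℝ) (t r : ℝ) : ℝ := deriv (fun s => u s r) t

/-- Partial derivative in the second (space) variable. -/
def partial_r (u : ℝ → ℝ → ℝ) (t r : ℝ) : ℝ := deriv (fun s => u t s) r

/-- Second partial derivative in the second (space) variable. -/
def partial_rr (u : ℝ → ℝ → ℝ) (t r : ℝ) : ℝ := deriv (deriv (fun s => u t s)) r

/-- Mixed partial derivative: first in space, then in time. -/
def partial_tr (u : ℝ → ℝ → ℝ) (t r : ℝ) : ℝ := deriv (fun s => deriv (fun y => u s y) r) t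

/-- `u` is C² on ℝ × (0,∞): `u`, `u_t`, `u_r`, `u_rr` and the mixed partial `u_tr`
exist and are continuous there. -/
def IsC2On (u : ℝ → ℝ → ℝ) : Prop :=
  (∀ t r : ℝ, 0 < r → DifferentiableAt ℝ (fun s => u s r) t) ∧
  (∀ t r : ℝ, 0 < r → DifferentiableAt ℝ (fun s => u t s) r) ∧
  (∀ t r : ℝ, 0 < r → DifferentiableAt ℝ (deriv (fun s => u t s)) r) ∧
  (∀ t r : ℝ, 0 < r → DifferentiableAt ℝ (fun s => deriv (fun y => u s y) r) t) ∧
  ContinuousOn (fun q : ℝ × ℝ => u q.1 q.2) {q : ℝ × ℝ | 0 < q.2} ∧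
  ContinuousOn (fun q : ℝ × ℝ => partial_t u q.1 q.2) {q : ℝ × ℝ | 0 < q.2} ∧
  ContinuousOn (fun q : ℝ × ℝ => partial_r u q.1 q.2) {q : ℝ × ℝ | 0 < q.2} ∧
  ContinuousOn (fun q : ℝ × ℝ => partial_rr u q.1 q.2) {q : ℝ × ℝ | 0 < q.2} ∧
  ContinuousOn (fun q : ℝ × ℝ => partial_tr u q.1 q.2) {q : ℝ × ℝ | 0 < q.2}


lemma hasDerivAt_scale (f : ℝ → ℝ) (c t : ℝ) (hf : DifferentiableAt ℝ f (c*t)) :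
    HasDerivAt (fun s => f (c*s)) (c * deriv f (c*t)) t := by
  have := hf.hasDerivAt.comp t ((hasDerivAt_id t).const_mul c)
  simpa [Function.comp_def, mul_comm] using this

/-- The scaling-and-shift point symmetry X₄ of the 1-dimensional nonlinear
diffusion-reaction equation with source `f(u) = k/(a+u)`. -/
theorem symmetry_X4 (h : ℝ → ℝ) (hh : Differentiable ℝ h) (a k m ε : ℝ)
    (u : ℝ → ℝ → ℝ) (hu : IsC2On u)
    (hau : ∀ t r : ℝ, 0 < r → a + u t r ≠ 0)
    (hpde : ∀ t r : ℝ, 0 < r →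
      partial_t u t r = deriv h (partial_r u t r) * partial_rr u t r
        + (m / r) * h (partial_r u t r) + k / (a + u t r))
    (v : ℝ → ℝ → ℝ)
    (hv : ∀ t r : ℝ,
      v t r = Real.exp ε * (a + u (Real.exp (-2 * ε) * t) (Real.exp (-ε) * r)) - a) :
    ∀ t r : ℝ, 0 < r →
      a + v t r ≠ 0 ∧
      partial_t v t r = deriv h (partial_r v t r) * partial_rr v t r
        + (m / r) * h (partial_r v t r) + k / (a + v t r) := by
  intro t r hr
  set c := Real.exp (-2*ε) with hc
  set d := Real.exp (-ε) with hd
  set E := Real.exp ε with hE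
  have hEd : E * d = 1 := by rw [hE, hd, ← Real.exp_add]; norm_num
  have hEc : E * c = d := by rw [hE, hc, hd, ← Real.exp_add]; ring_nf
  have hdpos : 0 < d := Real.exp_pos _
  have hd0 : d ≠ 0 := hdpos.ne'
  have hE0 : E ≠ 0 := (Real.exp_pos _).ne'
  set t' := c * t with ht'
  have hr' : 0 < d * r := mul_pos hdpos hr
  obtain ⟨hUt, hUr, hUrr, hUtr, -⟩ := hu
  have hau' := hau t' (d * r) hr'
  have hav : a + v t r = E * (a + u t' (d * r)) := by rw [hv]; ring
  have hne : a + v t r ≠ 0 := by rw [hav]; exact mul_ne_zero hE0 hau'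
  refine ⟨hne, ?_⟩
  -- partial_t
  have hvt : partial_t v t r = d * partial_t u t' (d * r) := by
    have h2 : HasDerivAt (fun s => u (c*s) (d*r)) (c * partial_t u t' (d*r)) t :=
      hasDerivAt_scale (fun s => u s (d*r)) c t (ht' ▸ hUt t' (d*r) hr')
    have h3 : HasDerivAt (fun s => E * (a + u (c*s) (d*r)) - a)
        (E * (c * partial_t u t' (d*r))) t := ((h2.const_add a).const_mul E).sub_const a
    have h4 : (fun s => v s r) = fun s => E * (a + u (c*s) (d*r)) - a := by
      funext s; exact hv s r
    rw [partial_t, h4, h3.deriv, ← mul_assoc, hEc]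
  -- partial_r at arbitrary positive s
  have hvr : ∀ s : ℝ, 0 < s → partial_r v t s = partial_r u t' (d * s) := by
    intro s hs
    have hs' : 0 < d * s := mul_pos hdpos hs
    have h2 : HasDerivAt (fun y => u t' (d*y)) (d * partial_r u t' (d*s)) s :=
      hasDerivAt_scale (fun y => u t' y) d s (hUr t' (d*s) hs')
    have h3 : HasDerivAt (fun y => E * (a + u t' (d*y)) - a)
        (E * (d * partial_r u t' (d*s))) s := ((h2.const_add a).const_mul E).sub_const a
    have h4 : (fun y => v t y) = fun y => E * (a + u t' (d*y)) - a := by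
      funext y; exact hv t y
    rw [partial_r, h4, h3.deriv, ← mul_assoc, hEd, one_mul]
  -- partial_rr
  have hvrr : partial_rr v t r = d * partial_rr u t' (d * r) := by
    have heq : deriv (fun s => v t s) =ᶠ[nhds r] fun s => partial_r u t' (d * s) := by
      filter_upwards [Ioi_mem_nhds hr] with s hs
      exact hvr s hs
    have h2 : HasDerivAt (fun s => deriv (fun y => u t' y) (d*s))
        (d * partial_rr u t' (d*r)) r :=
      hasDerivAt_scale (deriv (fun y => u t' y)) d r (hUrr t' (d*r) hr')
    rw [partial_rr, heq.deriv_eq]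
    exact h2.deriv
  rw [hvt, hvr r hr, hvrr, hpde t' (d*r) hr', hav]
  have hEinv : E = d⁻¹ := by
    field_simp
    linarith [hEd]
  rw [hEinv]
  field_simp
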